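/- If rank(λ) ≥ 2 then every Yamanouchi word y compatible with the straight shape λ has Peak(y) ≠ ∅ and Val(y) ≠ ∅; if rank(λ) = 1 then there is exactly one y ∈ Y(λ) with Val(y) = ∅ (namely y = 1 2 ⋯ k 1 1 ⋯ 1) and exactly one y ∈ Y(λ) with Peak(y) = ∅ (namely y = 1 1 ⋯ 1 2 3 ⋯ k). -/

import Mathlib

/-- The number of occurrences of the letter `i` among `y 1, …, y j`. -/
def cntY (y : ℕ → ℕ) (i j : ℕ) : ℕ := ((Finset.Icc 1 j).filter (fun t => y t = i)).card

/-- `y` is a Yamanouchi word compatible with the skew shape `lam/mu` (of size `n`),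
normalized to `0` outside positions `1, …, n`: the letters are positive, the letter `i`
occurs `lam i - mu i` times, and every prefix `y^{(j)}` satisfies
`|y^{(j)}|_{i+1} + mu_{i+1} ≤ |y^{(j)}|_i + mu_i`. -/
def IsYamWord (lam mu : ℕ → ℕ) (n : ℕ) (y : ℕ → ℕ) : Prop :=
  (∀ j, 1 ≤ j → j ≤ n → 1 ≤ y j) ∧
  (∀ j, ¬(1 ≤ j ∧ j ≤ n) → y j = 0) ∧
  (∀ i, 1 ≤ i → cntY y i n = lam i - mu i) ∧
  (∀ i j, 1 ≤ i → j ≤ n → cntY y (i+1) j + mu (i+1) ≤ cntY y i j + mu i)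

/-- The peak set of a word: `y (i-1) < y i ≥ y (i+1)`. -/
def wordPeakSet (n : ℕ) (y : ℕ → ℕ) : Set ℕ :=
  {i | 2 ≤ i ∧ i + 1 ≤ n ∧ y (i-1) < y i ∧ y (i+1) ≤ y i}

/-- The valley set of a word: `y (i-1) ≥ y i < y (i+1)`. -/
def wordValleySet (n : ℕ) (y : ℕ → ℕ) : Set ℕ :=
  {i | 2 ≤ i ∧ i + 1 ≤ n ∧ y i ≤ y (i-1) ∧ y i < y (i+1)}

/-! ### Auxiliary lemmas -/

lemma cntY_mono (y : ℕ → ℕ) (m : ℕ) {j j' : ℕ} (h : j ≤ j') :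
    cntY y m j ≤ cntY y m j' :=
  Finset.card_le_card (Finset.filter_subset_filter _ (Finset.Icc_subset_Icc_right h))

lemma mem_cnt (y : ℕ → ℕ) {m t j : ℕ} (h1 : 1 ≤ t) (h2 : t ≤ j) (h3 : y t = m) :
    t ∈ (Finset.Icc 1 j).filter (fun s => y s = m) := by
  simp [Finset.mem_Icc, h1, h2, h3]

lemma cnt_pos (y : ℕ → ℕ) {m t j : ℕ} (h1 : 1 ≤ t) (h2 : t ≤ j) (h3 : y t = m) :
    1 ≤ cntY y m j :=
  Finset.card_pos.mpr ⟨t, mem_cnt y h1 h2 h3⟩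

lemma cnt_two (y : ℕ → ℕ) {m s t j : ℕ} (h1 : 1 ≤ s) (hst : s < t) (h2 : t ≤ j)
    (h3 : y s = m) (h4 : y t = m) : 2 ≤ cntY y m j := by
  have hsub : ({s, t} : Finset ℕ) ⊆ (Finset.Icc 1 j).filter (fun u => y u = m) := by
    intro u hu
    simp only [Finset.mem_insert, Finset.mem_singleton] at hu
    rcases hu with rfl | rfl
    · exact mem_cnt y h1 (by omega) h3
    · exact mem_cnt y (by omega) h2 h4
  have hcard : ({s, t} : Finset ℕ).card = 2 := by
    rw [Finset.card_insert_of_notMem (by simp; omega), Finset.card_singleton]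
  calc 2 = ({s, t} : Finset ℕ).card := hcard.symm
    _ ≤ _ := Finset.card_le_card hsub

lemma cnt_eq_zero (y : ℕ → ℕ) {m j : ℕ} (h : ∀ t, 1 ≤ t → t ≤ j → y t ≠ m) :
    cntY y m j = 0 := by
  unfold cntY
  rw [Finset.card_eq_zero, Finset.filter_eq_empty_iff]
  intro t ht
  rw [Finset.mem_Icc] at ht
  exact h t ht.1 ht.2

lemma cnt_le_one (y : ℕ → ℕ) {m j : ℕ}
    (h : ∀ s t, 1 ≤ s → s ≤ j → 1 ≤ t → t ≤ j → y s = m → y t = m → s = t) :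
    cntY y m j ≤ 1 := by
  apply Finset.card_le_one.mpr
  intro a ha b hb
  simp only [cntY, Finset.mem_filter, Finset.mem_Icc] at ha hb
  exact h a b ha.1.1 ha.1.2 hb.1.1 hb.1.2 ha.2 hb.2

lemma cnt_filter_eq (y : ℕ → ℕ) (m j : ℕ) (s : Finset ℕ)
    (h : ∀ t, (1 ≤ t ∧ t ≤ j ∧ y t = m) ↔ t ∈ s) : cntY y m j = s.card := by
  unfold cntY
  congr 1
  ext t
  simp only [Finset.mem_filter, Finset.mem_Icc]
  rw [← h t]
  tauto

lemma cnt_zero (y : ℕ → ℕ) (m : ℕ) : cntY y m 0 = 0 := by simp [cntY]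

lemma no_valley {n : ℕ} {y : ℕ → ℕ} (h : wordValleySet n y = ∅) :
    ∀ i, 2 ≤ i → i + 1 ≤ n → y i ≤ y (i-1) → y (i+1) ≤ y i := by
  intro i h1 h2 h3
  by_contra hc
  have hm : i ∈ wordValleySet n y := ⟨h1, h2, h3, by omega⟩
  rw [h] at hm
  exact hm

lemma no_peak {n : ℕ} {y : ℕ → ℕ} (h : wordPeakSet n y = ∅) :
    ∀ i, 2 ≤ i → i + 1 ≤ n → y (i-1) < y i → y i < y (i+1) := by
  intro i h1 h2 h3
  by_contra hc
  have hm : i ∈ wordPeakSet n y := ⟨h1, h2, h3, by omega⟩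
  rw [h] at hm
  exact hm

section
variable {lam : ℕ → ℕ} {n : ℕ} {y : ℕ → ℕ}

lemma yam_pre (hY : IsYamWord lam (fun _ => 0) n y) :
    ∀ i j, 1 ≤ i → j ≤ n → cntY y (i+1) j ≤ cntY y i j := by
  intro i j hi hj
  simpa using hY.2.2.2 i j hi hj

lemma yam_first (hY : IsYamWord lam (fun _ => 0) n y) (hn : 1 ≤ n) : y 1 = 1 := by
  have h1 : 1 ≤ y 1 := hY.1 1 le_rfl hn
  by_contra hne
  have h2 : 2 ≤ y 1 := by omega
  have hz : cntY y (y 1 - 1) 1 = 0 := by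
    apply cnt_eq_zero
    intro t ht1 ht2
    have : t = 1 := by omega
    subst this
    omega
  have hp := yam_pre hY (y 1 - 1) 1 (by omega) hn
  have he : (y 1 - 1) + 1 = y 1 := by omega
  rw [he] at hp
  have hpos : 1 ≤ cntY y (y 1) 1 := cnt_pos y le_rfl le_rfl rfl
  omega

lemma prefix_id (hY : IsYamWord lam (fun _ => 0) n y) {d : ℕ} (hd : d ≤ n)
    (hinc : ∀ i, 2 ≤ i → i ≤ d → y (i-1) < y i) :
    ∀ t, 1 ≤ t → t ≤ d → y t = t := by
  intro t
  induction t using Nat.strong_induction_on with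
  | _ t ih =>
    intro ht1 htd
    rcases Nat.lt_or_ge t 2 with h2 | h2
    · have : t = 1 := by omega
      subst this
      exact yam_first hY (by omega)
    · have hprev : y (t-1) = t-1 := ih (t-1) (by omega) (by omega) (by omega)
      have hlt : y (t-1) < y t := hinc t h2 htd
      by_contra hne
      have hgt : t < y t := by omega
      have hz : cntY y (y t - 1) t = 0 := by
        apply cnt_eq_zero
        intro s hs1 hst
        rcases Nat.lt_or_ge s t with hslt | hsge
        · have : y s = s := ih s hslt hs1 (by omega)
          omega
        · have : s = t := by omega
          subst this
          omega
      have hp := yam_pre hY (y t - 1) t (by omega) (by omega)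
      have he : (y t - 1) + 1 = y t := by omega
      rw [he] at hp
      have hpos : 1 ≤ cntY y (y t) t := cnt_pos y ht1 le_rfl rfl
      omega

lemma chain_down
    (hnv : ∀ i, 2 ≤ i → i + 1 ≤ n → y i ≤ y (i-1) → y (i+1) ≤ y i)
    {d : ℕ} (hd2 : 2 ≤ d) (h0 : y d ≤ y (d-1)) :
    ∀ j, d ≤ j → j ≤ n → y j ≤ y (j-1) := by
  intro j hdj
  induction j, hdj using Nat.le_induction with
  | base => intro _; exact h0
  | succ j hj ih =>
    intro hjn
    have := hnv j (by omega) hjn (ih (by omega))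
    simpa using this

lemma mono_down {d : ℕ}
    (hchain : ∀ j, d ≤ j → j ≤ n → y j ≤ y (j-1)) :
    ∀ s t, d - 1 ≤ s → s ≤ t → t ≤ n → y t ≤ y s := by
  intro s t hs hst
  induction t, hst using Nat.le_induction with
  | base => intro _; exact le_rfl
  | succ t ht ih =>
    intro htn
    have h1 := hchain (t+1) (by omega) htn
    simp only [Nat.add_sub_cancel] at h1
    exact le_trans h1 (ih (by omega))

lemma chain_up
    (hnp : ∀ i, 2 ≤ i → i + 1 ≤ n → y (i-1) < y i → y i < y (i+1))
    {a : ℕ} (ha2 : 2 ≤ a) (h0 : y (a-1) < y a) :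
    ∀ j, a ≤ j → j ≤ n → y (j-1) < y j := by
  intro j haj
  induction j, haj using Nat.le_induction with
  | base => intro _; exact h0
  | succ j hj ih =>
    intro hjn
    have := hnp j (by omega) hjn (ih (by omega))
    simpa using this

lemma mono_up {a : ℕ}
    (hchain : ∀ j, a ≤ j → j ≤ n → y (j-1) < y j) :
    ∀ s t, a - 1 ≤ s → s < t → t ≤ n → y s < y t := by
  intro s t hs hst
  induction t, hst using Nat.le_induction with
  | base =>
    intro hn
    have := hchain (s+1) (by omega) hn
    simpa using this
  | succ t ht ih =>
    intro htn
    have h1 := hchain (t+1) (by omega) htn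
    simp only [Nat.add_sub_cancel] at h1
    exact lt_trans (ih (by omega)) h1

lemma all_ones (h1 : y 1 = 1) (hpos : ∀ j, 1 ≤ j → j ≤ n → 1 ≤ y j)
    {b : ℕ} (hb : b ≤ n) (hdec : ∀ i, 2 ≤ i → i ≤ b → y i ≤ y (i-1)) :
    ∀ t, 1 ≤ t → t ≤ b → y t = 1 := by
  intro t
  induction t using Nat.strong_induction_on with
  | _ t ih =>
    intro ht1 htb
    rcases Nat.lt_or_ge t 2 with h2 | h2
    · have : t = 1 := by omega
      subst this; exact h1
    · have hprev : y (t-1) = 1 := ih (t-1) (by omega) (by omega) (by omega)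
      have := hdec t h2 htb
      have := hpos t ht1 (by omega)
      omega

lemma asc_values (hY : IsYamWord lam (fun _ => 0) n y)
    {a : ℕ} (ha2 : 2 ≤ a)
    (hones : ∀ t, 1 ≤ t → t ≤ a - 1 → y t = 1)
    (hchain : ∀ j, a ≤ j → j ≤ n → y (j-1) < y j) :
    ∀ t, a ≤ t → t ≤ n → y t = t - a + 2 := by
  intro t
  induction t using Nat.strong_induction_on with
  | _ t ih =>
    intro hat htn
    have hprev : y (t-1) = t - a + 1 := by
      rcases Nat.eq_or_lt_of_le hat with h | h
      · rw [← h]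
        have := hones (a-1) (by omega) le_rfl
        omega
      · have := ih (t-1) (by omega) (by omega) (by omega)
        omega
    have hlt : y (t-1) < y t := hchain t hat htn
    by_contra hne
    have hgt : t - a + 2 < y t := by omega
    have hz : cntY y (y t - 1) t = 0 := by
      apply cnt_eq_zero
      intro s hs1 hst
      rcases Nat.lt_or_ge s a with hsa | hsa
      · have : y s = 1 := hones s hs1 (by omega)
        omega
      · rcases Nat.lt_or_ge s t with hslt | hsge
        · have : y s = s - a + 2 := ih s hslt hsa (by omega)
          omega
        · have : s = t := by omega
          subst this
          omega
    have hp := yam_pre hY (y t - 1) t (by omega) htn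
    have he : (y t - 1) + 1 = y t := by omega
    rw [he] at hp
    have hpos : 1 ≤ cntY y (y t) t := cnt_pos y (by omega) le_rfl rfl
    omega

end

/-! ### The extremal hook words -/

def wA (n k : ℕ) : ℕ → ℕ := fun j => if 1 ≤ j ∧ j ≤ n then (if j ≤ k then j else 1) else 0

def wB (n L : ℕ) : ℕ → ℕ := fun j => if 1 ≤ j ∧ j ≤ n then (if j ≤ L then 1 else j - L + 1) else 0

lemma wA_cnt1 (n k : ℕ) (hk : 1 ≤ k) {j : ℕ} (h1 : 1 ≤ j) (h2 : j ≤ n) :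
    cntY (wA n k) 1 j = j - k + 1 := by
  rw [cnt_filter_eq (wA n k) 1 j (insert 1 (Finset.Icc (k+1) j)) ?_]
  · rw [Finset.card_insert_of_notMem (by simp [Finset.mem_Icc]; omega), Nat.card_Icc]
    omega
  · intro t
    simp only [Finset.mem_insert, Finset.mem_Icc, wA]
    split_ifs <;> omega

lemma wA_cntm (n k : ℕ) {m : ℕ} (hm : 2 ≤ m) {j : ℕ} (h2 : j ≤ n) :
    cntY (wA n k) m j = if m ≤ j ∧ m ≤ k then 1 else 0 := by
  split_ifs with h
  · rw [cnt_filter_eq (wA n k) m j {m} ?_]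
    · simp
    · intro t
      simp only [Finset.mem_singleton, wA]
      split_ifs <;> omega
  · apply cnt_eq_zero
    intro t ht1 ht2
    simp only [wA]
    split_ifs <;> omega

lemma wB_cnt1 (n L : ℕ) {j : ℕ} (h2 : j ≤ n) :
    cntY (wB n L) 1 j = min j L := by
  rw [cnt_filter_eq (wB n L) 1 j (Finset.Icc 1 (min j L)) ?_]
  · rw [Nat.card_Icc]; omega
  · intro t
    simp only [Finset.mem_Icc, wB]
    split_ifs <;> omega

lemma wB_cntm (n L : ℕ) {m : ℕ} (hm : 2 ≤ m) {j : ℕ} (h2 : j ≤ n) :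
    cntY (wB n L) m j = if L + m - 1 ≤ j then 1 else 0 := by
  split_ifs with h
  · rw [cnt_filter_eq (wB n L) m j {L + m - 1} ?_]
    · simp
    · intro t
      simp only [Finset.mem_singleton, wB]
      split_ifs <;> omega
  · apply cnt_eq_zero
    intro t ht1 ht2
    simp only [wB]
    split_ifs <;> omega

theorem stmt19 (lam : ℕ → ℕ) (n k : ℕ) (hk : 1 ≤ k)
    (hlam : ∀ i, 1 ≤ i → lam (i+1) ≤ lam i)
    (hparts : ∀ i, 1 ≤ i → i ≤ k → 1 ≤ lam i)
    (hzero : ∀ i, k < i → lam i = 0)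
    (hn : n = ∑ i ∈ Finset.Icc 1 k, lam i) :
    (2 ≤ lam 2 → ∀ y, IsYamWord lam (fun _ => 0) n y →
        wordPeakSet n y ≠ ∅ ∧ wordValleySet n y ≠ ∅) ∧
    (lam 2 ≤ 1 →
      (IsYamWord lam (fun _ => 0) n
          (fun j => if 1 ≤ j ∧ j ≤ n then (if j ≤ k then j else 1) else 0) ∧
        wordValleySet n
          (fun j => if 1 ≤ j ∧ j ≤ n then (if j ≤ k then j else 1) else 0) = ∅ ∧
        (∀ y, IsYamWord lam (fun _ => 0) n y → wordValleySet n y = ∅ →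
          y = fun j => if 1 ≤ j ∧ j ≤ n then (if j ≤ k then j else 1) else 0)) ∧
      (IsYamWord lam (fun _ => 0) n
          (fun j => if 1 ≤ j ∧ j ≤ n then (if j ≤ lam 1 then 1 else j - lam 1 + 1) else 0) ∧
        wordPeakSet n
          (fun j => if 1 ≤ j ∧ j ≤ n then (if j ≤ lam 1 then 1 else j - lam 1 + 1) else 0) = ∅ ∧
        (∀ y, IsYamWord lam (fun _ => 0) n y → wordPeakSet n y = ∅ →
          y = fun j => if 1 ≤ j ∧ j ≤ n then (if j ≤ lam 1 then 1 else j - lam 1 + 1) else 0))) := by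
  constructor
  · -- Part A : rank ≥ 2
    intro h2 y hY
    obtain ⟨hpos, hout, hcnt, -⟩ := id hY
    have hpre := yam_pre hY
    have hc2 : cntY y 2 n = lam 2 := by
      simpa using hcnt 2 (by omega)
    have hn1 : 1 ≤ n := by
      by_contra hc
      have : cntY y 2 n = 0 := cnt_eq_zero y (fun t ht1 ht2 => by omega)
      omega
    constructor
    · -- peak exists
      intro hemp
      have hnp := no_peak hemp
      by_cases hex : ∃ i, 2 ≤ i ∧ i ≤ n ∧ y (i-1) < y i
      · have ha := Nat.find_spec hex
        set a := Nat.find hex with hadef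
        have hones : ∀ t, 1 ≤ t → t ≤ a - 1 → y t = 1 := by
          apply all_ones (yam_first hY hn1) hpos (b := a - 1) (by omega)
          intro i hi2 hib
          have := Nat.find_min hex (show i < a by omega)
          omega
        have hchain := chain_up hnp ha.1 ha.2.2
        have hmono := mono_up hchain
        have hle1 : cntY y 2 n ≤ 1 := by
          apply cnt_le_one
          intro s t hs1 hsn ht1 htn hys hyt
          have hsa : a ≤ s := by
            by_contra hc
            have := hones s hs1 (by omega)
            omega
          have hta : a ≤ t := by
            by_contra hc
            have := hones t ht1 (by omega)
            omega
          rcases lt_trichotomy s t with h | h | h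
          · have := hmono s t (by omega) h htn
            omega
          · exact h
          · have := hmono t s (by omega) h hsn
            omega
        omega
      · push_neg at hex
        have hones : ∀ t, 1 ≤ t → t ≤ n → y t = 1 :=
          all_ones (yam_first hY hn1) hpos (b := n) le_rfl (fun i hi2 hin => hex i hi2 hin)
        have : cntY y 2 n = 0 := by
          apply cnt_eq_zero
          intro t ht1 ht2
          rw [hones t ht1 ht2]
          omega
        omega
    · -- valley exists
      intro hemp
      have hnv := no_valley hemp
      by_cases hex : ∃ i, 2 ≤ i ∧ i ≤ n ∧ y i ≤ y (i-1)
      · have hd := Nat.find_spec hex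
        set d := Nat.find hex with hddef
        have hinc : ∀ i, 2 ≤ i → i ≤ d - 1 → y (i-1) < y i := by
          intro i hi2 hid
          have := Nat.find_min hex (show i < d by omega)
          omega
        have hid : ∀ t, 1 ≤ t → t ≤ d - 1 → y t = t :=
          prefix_id hY (by omega) hinc
        have hchain := chain_down hnv hd.1 hd.2.2
        have hmono := mono_down hchain
        have hyd1 : y (d-1) = d-1 := hid (d-1) (by omega) le_rfl
        have hex2 : ∃ j, d ≤ j ∧ j ≤ n ∧ y j = 2 := by
          by_contra hno
          push_neg at hno
          have : cntY y 2 n ≤ 1 := by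
            apply cnt_le_one
            intro s t hs1 hsn ht1 htn hys hyt
            have hs' : s = 2 := by
              rcases Nat.lt_or_ge s d with h | h
              · have := hid s hs1 (by omega); omega
              · exact absurd hys (hno s h hsn)
            have ht' : t = 2 := by
              rcases Nat.lt_or_ge t d with h | h
              · have := hid t ht1 (by omega); omega
              · exact absurd hyt (hno t h htn)
            omega
          omega
        obtain ⟨j0, hj0d, hj0n, hj02⟩ := hex2
        have hd3 : 3 ≤ d := by
          have := hmono (d-1) j0 le_rfl (by omega) hj0n
          omega
        have hy2 : y 2 = 2 := hid 2 (by omega) (by omega)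
        have h2c : 2 ≤ cntY y 2 j0 := cnt_two y (by omega : (1:ℕ) ≤ 2) (by omega) le_rfl hy2 hj02
        have h1c : cntY y 1 j0 ≤ 1 := by
          apply cnt_le_one
          intro s t hs1 hsj ht1 htj hys hyt
          have key : ∀ u, 1 ≤ u → u ≤ j0 → y u = 1 → u = 1 := by
            intro u hu1 huj hyu
            by_contra hc
            rcases Nat.lt_or_ge u d with h | h
            · have := hid u hu1 (by omega); omega
            · have := hmono u j0 (by omega) huj hj0n
              omega
          rw [key s hs1 hsj hys, key t ht1 htj hyt]
        have hp12 : cntY y 2 j0 ≤ cntY y 1 j0 := hpre 1 j0 le_rfl hj0n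
        omega
      · push_neg at hex
        have hid : ∀ t, 1 ≤ t → t ≤ n → y t = t :=
          prefix_id hY le_rfl (fun i hi2 hin => hex i hi2 hin)
        have : cntY y 2 n ≤ 1 := by
          apply cnt_le_one
          intro s t hs1 hsn ht1 htn hys hyt
          have := hid s hs1 hsn
          have := hid t ht1 htn
          omega
        omega
  · -- Part B : hook
    intro h1
    have hL1 : 1 ≤ lam 1 := hparts 1 le_rfl hk
    have hlam_le : ∀ i, 2 ≤ i → lam i ≤ 1 := by
      intro i hi
      induction i, hi using Nat.le_induction with
      | base => exact h1
      | succ i hi ih => exact le_trans (hlam i (by omega)) ih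
    have hlam1' : ∀ i, 2 ≤ i → i ≤ k → lam i = 1 := by
      intro i hi hik
      have := hparts i (by omega) hik
      have := hlam_le i hi
      omega
    have hnval : n = lam 1 + (k - 1) := by
      have hins : Finset.Icc 1 k = insert 1 (Finset.Icc 2 k) := by
        ext t
        simp only [Finset.mem_Icc, Finset.mem_insert]
        omega
      rw [hn, hins, Finset.sum_insert (by simp)]
      have hsum : ∑ i ∈ Finset.Icc 2 k, lam i = ∑ i ∈ Finset.Icc 2 k, 1 :=
        Finset.sum_congr rfl (fun i hi => by
          rw [Finset.mem_Icc] at hi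
          exact hlam1' i hi.1 hi.2)
      rw [hsum, Finset.sum_const, smul_eq_mul, mul_one, Nat.card_Icc]
      omega
    have hkn : k ≤ n := by omega
    have hn1 : 1 ≤ n := by omega
    refine ⟨⟨?_, ?_, ?_⟩, ?_, ?_, ?_⟩
    · show IsYamWord lam (fun _ => 0) n (wA n k)
      refine ⟨?_, ?_, ?_, ?_⟩
      · intro j hj1 hjn
        simp only [wA, if_pos (⟨hj1, hjn⟩ : 1 ≤ j ∧ j ≤ n)]
        split_ifs <;> omega
      · intro j hj
        simp only [wA, if_neg hj]
      · intro i hi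
        show cntY (wA n k) i n = lam i
        rcases Nat.lt_or_ge i 2 with h2 | h2
        · have : i = 1 := by omega
          subst this
          rw [wA_cnt1 n k hk hn1 le_rfl]
          omega
        · rw [wA_cntm n k h2 le_rfl]
          rcases Nat.lt_or_ge k i with h | h
          · rw [if_neg (by omega), hzero i h]
          · rw [if_pos ⟨by omega, h⟩, hlam1' i h2 h]
      · intro i j hi hj
        show cntY (wA n k) (i+1) j ≤ cntY (wA n k) i j
        rcases Nat.eq_zero_or_pos j with rfl | hj1
        · rw [cnt_zero, cnt_zero]
        · rcases Nat.lt_or_ge i 2 with h2 | h2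
          · have : i = 1 := by omega
            subst this
            rw [wA_cnt1 n k hk hj1 hj, wA_cntm n k (show 2 ≤ 1+1 by omega) hj]
            split_ifs <;> omega
          · rw [wA_cntm n k (show 2 ≤ i+1 by omega) hj, wA_cntm n k h2 hj]
            split_ifs <;> omega
    · show wordValleySet n (wA n k) = ∅
      rw [Set.eq_empty_iff_forall_notMem]
      intro i hi
      simp only [wordValleySet, Set.mem_setOf_eq] at hi
      obtain ⟨h2i, hin, hle, hlt⟩ := hi
      simp only [wA] at hle hlt
      split_ifs at hle hlt <;> omega
    · intro y hY hemp
      obtain ⟨hpos, hout, hcnt, -⟩ := id hY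
      have hnv := no_valley hemp
      funext j
      show y j = wA n k j
      rcases Classical.em (1 ≤ j ∧ j ≤ n) with hj | hj
      on_goal 2 =>
        rw [hout j hj]
        simp only [wA, if_neg hj]
      by_cases hex : ∃ i, 2 ≤ i ∧ i ≤ n ∧ y i ≤ y (i-1)
      · have hd := Nat.find_spec hex
        set d := Nat.find hex with hddef
        have hinc : ∀ i, 2 ≤ i → i ≤ d - 1 → y (i-1) < y i := by
          intro i hi2 hid
          have := Nat.find_min hex (show i < d by omega)
          omega
        have hid := prefix_id hY (show d - 1 ≤ n by omega) hinc
        have hchain := chain_down hnv hd.1 hd.2.2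
        have hmono := mono_down hchain
        have hyd1 : y (d-1) = d-1 := hid (d-1) (by omega) le_rfl
        have hdk_le : d - 1 ≤ k := by
          have hx : 1 ≤ cntY y (d-1) n := cnt_pos y (by omega) (by omega) hyd1
          have hy : cntY y (d-1) n = lam (d-1) := by simpa using hcnt (d-1) (by omega)
          by_contra hc
          have := hzero (d-1) (by omega)
          omega
        have hdk_ge : k ≤ d - 1 := by
          have hck : cntY y k n = lam k := by simpa using hcnt k hk
          have hlamk : 1 ≤ lam k := hparts k hk le_rfl
          have hposk : 0 < cntY y k n := by omega
          obtain ⟨t, ht⟩ := Finset.card_pos.mp hposk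
          simp only [cntY, Finset.mem_filter, Finset.mem_Icc] at ht
          rcases Nat.lt_or_ge t d with h | h
          · have := hid t ht.1.1 (by omega)
            omega
          · have := hmono (d-1) t le_rfl (by omega) ht.1.2
            omega
        have htail : ∀ t, d ≤ t → t ≤ n → y t = 1 := by
          intro t htd htn
          have hub : y t ≤ d - 1 := by
            have := hmono (d-1) t le_rfl (by omega) htn
            omega
          have hlb : 1 ≤ y t := hpos t (by omega) htn
          by_contra hne
          have h2yt : 2 ≤ y t := by omega
          have hm : y (y t) = y t := hid (y t) (by omega) (by omega)
          have h2c : 2 ≤ cntY y (y t) n :=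
            cnt_two y (by omega) (show y t < t by omega) htn hm rfl
          have hcy : cntY y (y t) n = lam (y t) := by simpa using hcnt (y t) (by omega)
          have := hlam_le (y t) h2yt
          omega
        simp only [wA, if_pos hj]
        rcases le_or_gt j (d-1) with h | h
        · rw [if_pos (by omega)]
          exact hid j hj.1 h
        · rw [if_neg (by omega)]
          exact htail j (by omega) hj.2
      · push_neg at hex
        have hid := prefix_id hY le_rfl (fun i hi2 hin => hex i hi2 hin)
        have hnk : n ≤ k := by
          by_contra hc
          have hy : y (k+1) = k+1 := hid (k+1) (by omega) (by omega)
          have h1' : 1 ≤ cntY y (k+1) n := cnt_pos y (by omega) (by omega) hy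
          have h2' : cntY y (k+1) n = lam (k+1) := by simpa using hcnt (k+1) (by omega)
          have := hzero (k+1) (by omega)
          omega
        simp only [wA, if_pos hj]
        rw [if_pos (by omega)]
        exact hid j hj.1 hj.2
    · show IsYamWord lam (fun _ => 0) n (wB n (lam 1))
      refine ⟨?_, ?_, ?_, ?_⟩
      · intro j hj1 hjn
        simp only [wB, if_pos (⟨hj1, hjn⟩ : 1 ≤ j ∧ j ≤ n)]
        split_ifs <;> omega
      · intro j hj
        simp only [wB, if_neg hj]
      · intro i hi
        show cntY (wB n (lam 1)) i n = lam i
        rcases Nat.lt_or_ge i 2 with h2 | h2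
        · have : i = 1 := by omega
          subst this
          rw [wB_cnt1 n (lam 1) le_rfl]
          omega
        · rw [wB_cntm n (lam 1) h2 le_rfl]
          rcases Nat.lt_or_ge k i with h | h
          · rw [if_neg (by omega), hzero i h]
          · rw [if_pos (by omega), hlam1' i h2 h]
      · intro i j hi hj
        show cntY (wB n (lam 1)) (i+1) j ≤ cntY (wB n (lam 1)) i j
        rcases Nat.lt_or_ge i 2 with h2 | h2
        · have : i = 1 := by omega
          subst this
          rw [wB_cnt1 n (lam 1) hj, wB_cntm n (lam 1) (show 2 ≤ 1+1 by omega) hj]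
          split_ifs <;> omega
        · rw [wB_cntm n (lam 1) (show 2 ≤ i+1 by omega) hj, wB_cntm n (lam 1) h2 hj]
          split_ifs <;> omega
    · show wordPeakSet n (wB n (lam 1)) = ∅
      rw [Set.eq_empty_iff_forall_notMem]
      intro i hi
      simp only [wordPeakSet, Set.mem_setOf_eq] at hi
      obtain ⟨h2i, hin, hlt, hle⟩ := hi
      simp only [wB] at hlt hle
      split_ifs at hlt hle <;> omega
    · intro y hY hemp
      obtain ⟨hpos, hout, hcnt, -⟩ := id hY
      have hnp := no_peak hemp
      funext j
      show y j = wB n (lam 1) j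
      rcases Classical.em (1 ≤ j ∧ j ≤ n) with hj | hj
      on_goal 2 =>
        rw [hout j hj]
        simp only [wB, if_neg hj]
      by_cases hex : ∃ i, 2 ≤ i ∧ i ≤ n ∧ y (i-1) < y i
      · have ha := Nat.find_spec hex
        set a := Nat.find hex with hadef
        have hones : ∀ t, 1 ≤ t → t ≤ a - 1 → y t = 1 := by
          apply all_ones (yam_first hY hn1) hpos (b := a-1) (by omega)
          intro i hi2 hib
          have := Nat.find_min hex (show i < a by omega)
          omega
        have hchain := chain_up hnp ha.1 ha.2.2
        have hvals := asc_values hY ha.1 hones hchain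
        have hLa : lam 1 = a - 1 := by
          have hc1 : cntY y 1 n = lam 1 := by simpa using hcnt 1 le_rfl
          have hcard : cntY y 1 n = (Finset.Icc 1 (a-1)).card := by
            apply cnt_filter_eq
            intro t
            rw [Finset.mem_Icc]
            constructor
            · rintro ⟨ht1, htn, hyt⟩
              refine ⟨ht1, ?_⟩
              by_contra hc
              have := hvals t (by omega) htn
              omega
            · rintro ⟨ht1, ht2⟩
              exact ⟨ht1, by omega, hones t ht1 ht2⟩
          rw [Nat.card_Icc] at hcard
          omega
        simp only [wB, if_pos hj]
        rcases le_or_gt j (a-1) with h | h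
        · rw [if_pos (by omega)]
          exact hones j hj.1 h
        · rw [if_neg (by omega)]
          have := hvals j (by omega) hj.2
          omega
      · push_neg at hex
        have hones : ∀ t, 1 ≤ t → t ≤ n → y t = 1 :=
          all_ones (yam_first hY hn1) hpos (b := n) le_rfl (fun i hi2 hin => hex i hi2 hin)
        have hk1 : k = 1 := by
          by_contra hc
          have hk2 : 2 ≤ k := by omega
          have hlam2 : 1 ≤ lam 2 := hparts 2 (by omega) hk2
          have hz2 : cntY y 2 n = 0 := by
            apply cnt_eq_zero
            intro t ht1 ht2
            rw [hones t ht1 ht2]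
            omega
          have : cntY y 2 n = lam 2 := by simpa using hcnt 2 (by omega)
          omega
        simp only [wB, if_pos hj]
        rw [if_pos (by omega)]
        exact hones j hj.1 hj.2
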